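/- Let G be a finite simple connected graph on n vertices. Then the Sudoku number of G satisfies sn(G) = n − 1 if, and only if, G is the complete graph on n vertices. -/

import Mathlib

/-- A proper `k`-colouring of `G` using colours `{1, …, k}`. -/
def IsProperColouring {V : Type*} (G : SimpleGraph V) (k : ℕ) (φ : V → ℕ) : Prop :=
  (∀ v, φ v ∈ Finset.Icc 1 k) ∧ ∀ ⦃u v⦄, G.Adj u v → φ u ≠ φ v

/-- A partial proper `k`-colouring of `G` (uncoloured vertices get `none`). -/
def IsPartialProper {V : Type*} (G : SimpleGraph V) (k : ℕ) (ψ : V → Option ℕ) : Prop :=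
  (∀ v c, ψ v = some c → c ∈ Finset.Icc 1 k) ∧
    ∀ ⦃u v⦄, G.Adj u v → ∀ c, ψ u = some c → ψ v ≠ some c

/-- `φ` extends the partial colouring `ψ`. -/
def ExtendsPartial {V : Type*} (φ : V → ℕ) (ψ : V → Option ℕ) : Prop :=
  ∀ v c, ψ v = some c → φ v = c

/-- A Sudoku colouring: a partial proper `k`-colouring with exactly one extension to a
proper `k`-colouring of all of `G`. -/
def IsSudoku {V : Type*} (G : SimpleGraph V) (k : ℕ) (ψ : V → Option ℕ) : Prop :=
  IsPartialProper G k ψ ∧ ∃! φ : V → ℕ, IsProperColouring G k φ ∧ ExtendsPartial φ ψ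

/-- The Sudoku number: the least number of coloured vertices in a Sudoku colouring. -/
noncomputable def sudokuNumber {V : Type*} [Fintype V] (G : SimpleGraph V) (k : ℕ) : ℕ :=
  sInf {m | ∃ ψ : V → Option ℕ, IsSudoku G k ψ ∧
    (Finset.univ.filter fun v => (ψ v).isSome).card = m}

/-- The set of colours appearing on the coloured neighbours of `v` under `ψ`. -/
def nbrColours {V : Type*} [Fintype V] [DecidableEq V] (G : SimpleGraph V)
    [DecidableRel G.Adj] (ψ : V → Option ℕ) (v : V) : Finset ℕ :=
  (G.neighborFinset v).biUnion fun u => (ψ u).toFinset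

/-- A vertex is full (w.r.t. a proper `k`-colouring `φ`) if every colour other than its own
appears on its neighbourhood. -/
def IsFull {V : Type*} [Fintype V] [DecidableEq V] (G : SimpleGraph V)
    [DecidableRel G.Adj] (k : ℕ) (φ : V → ℕ) (v : V) : Prop :=
  (G.neighborFinset v).image φ = Finset.Icc 1 k \ {φ v}

/-- A proper `k`-colouring is 1-minimal if it has as few colour-1 vertices as possible. -/
def IsOneMinimal {V : Type*} [Fintype V] (G : SimpleGraph V) (k : ℕ) (φ : V → ℕ) : Prop :=
  IsProperColouring G k φ ∧ ∀ φ' : V → ℕ, IsProperColouring G k φ' →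
    (Finset.univ.filter fun v => φ v = 1).card ≤ (Finset.univ.filter fun v => φ' v = 1).card

set_option linter.unusedSectionVars false
set_option linter.unusedVariables false
set_option maxHeartbeats 1000000

namespace SudokuAux


variable {V : Type*} [Fintype V] [DecidableEq V]

/-- Every colour other than `φ x` appears on the neighbourhood of `x`. -/
def Full (G : SimpleGraph V) (k : ℕ) (φ : V → ℕ) (x : V) : Prop :=
  ∀ c ∈ Finset.Icc 1 k, c ≠ φ x → ∃ w, G.Adj x w ∧ φ w = c

/-- `φ` is the unique proper colouring agreeing with itself off `{u,v}`. -/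
def UniquePair (G : SimpleGraph V) (k : ℕ) (φ : V → ℕ) (u v : V) : Prop :=
  ∀ ρ : V → ℕ, IsProperColouring G k ρ → (∀ w, w ≠ u → w ≠ v → ρ w = φ w) → ρ = φ

variable {G : SimpleGraph V} {k : ℕ}

lemma exists_proper (hχ : G.chromaticNumber = k) :
    ∃ φ : V → ℕ, IsProperColouring G k φ := by
  have hc : G.Colorable k := by
    rw [← SimpleGraph.chromaticNumber_le_iff_colorable, hχ]
  obtain ⟨C⟩ := hc
  refine ⟨fun v => (C v : ℕ) + 1, fun v => ?_, fun u v huv => ?_⟩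
  · simp only [Finset.mem_Icc]
    have := (C v).isLt
    omega
  · have := C.valid huv
    simp only [ne_eq, Fin.ext_iff] at this ⊢
    omega

lemma not_colorable_pred (hχ : G.chromaticNumber = k) (hk : 1 ≤ k) :
    ¬ G.Colorable (k - 1) := by
  intro hc
  have := hc.chromaticNumber_le
  rw [hχ] at this
  have : k ≤ k - 1 := by exact_mod_cast this
  omega

/-- Every proper `k`-colouring uses every colour in `[1,k]`. -/
lemma uses_colour (hχ : G.chromaticNumber = k) {φ : V → ℕ}
    (hφ : IsProperColouring G k φ) {c : ℕ} (hc : c ∈ Finset.Icc 1 k) :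
    ∃ v, φ v = c := by
  simp only [Finset.mem_Icc] at hc
  by_contra h
  push_neg at h
  apply not_colorable_pred hχ (le_trans hc.1 hc.2)
  have hbound : ∀ v, (if φ v < c then φ v - 1 else φ v - 2) < k - 1 := by
    intro v
    have h1 := hφ.1 v
    simp only [Finset.mem_Icc] at h1
    have h2 := h v
    split_ifs <;> omega
  refine ⟨SimpleGraph.Coloring.mk (fun v => ⟨if φ v < c then φ v - 1 else φ v - 2, hbound v⟩)
    (fun {a b} hab => ?_)⟩
  have h1 := hφ.1 a
  have h2 := hφ.1 b
  have h3 := hφ.2 hab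
  have h4 := h a
  have h5 := h b
  simp only [Finset.mem_Icc] at h1 h2
  simp only [ne_eq, Fin.mk.injEq]
  split_ifs <;> omega

lemma proper_update {φ : V → ℕ} (hφ : IsProperColouring G k φ) {x : V} {c : ℕ}
    (hc : c ∈ Finset.Icc 1 k) (hfree : ∀ w, G.Adj x w → φ w ≠ c) :
    IsProperColouring G k (Function.update φ x c) := by
  constructor
  · intro v
    by_cases hv : v = x
    · subst hv; simpa using hc
    · rw [Function.update_of_ne hv]; exact hφ.1 v
  · intro a b hab
    have hne : a ≠ b := G.ne_of_adj hab
    by_cases ha : a = x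
    · subst ha
      rw [Function.update_self, Function.update_of_ne (Ne.symm hne)]
      exact fun h => hfree b hab h.symm
    · rw [Function.update_of_ne ha]
      by_cases hb : b = x
      · subst hb
        rw [Function.update_self]
        exact hfree a hab.symm
      · rw [Function.update_of_ne hb]
        exact hφ.2 hab

lemma config_NA {φ : V → ℕ} (hφ : IsProperColouring G k φ) {u v : V}
    (hnadj : ¬ G.Adj u v) (hfu : Full G k φ u) (hfv : Full G k φ v) :
    UniquePair G k φ u v := by
  intro ρ hρ hagree
  have key : ∀ x : V, Full G k φ x → (∀ w, G.Adj x w → ρ w = φ w) → ρ x = φ x := by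
    intro x hfx hx
    by_contra hne
    obtain ⟨w, hxw, hw⟩ := hfx (ρ x) (hρ.1 x) hne
    exact hρ.2 hxw ((hx w hxw).trans hw).symm
  have hu : ρ u = φ u := by
    apply key u hfu
    intro w huw
    refine hagree w (fun h => G.loopless.irrefl u (h ▸ huw)) (fun h => hnadj (h ▸ huw))
  have hv : ρ v = φ v := by
    apply key v hfv
    intro w hvw
    refine hagree w (fun h => hnadj (h ▸ hvw).symm) (fun h => G.loopless.irrefl v (h ▸ hvw))
  funext w
  by_cases hwu : w = u
  · subst hwu; exact hu
  by_cases hwv : w = v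
  · subst hwv; exact hv
  exact hagree w hwu hwv

lemma config_AD {φ : V → ℕ} (hφ : IsProperColouring G k φ) {u v : V}
    (hadj : G.Adj u v)
    (hi : ∀ c ∈ Finset.Icc 1 k, c ≠ φ u → ∃ w, G.Adj u w ∧ w ≠ v ∧ φ w = c)
    (hii : ∀ c ∈ Finset.Icc 1 k, c ≠ φ v → c ≠ φ u → ∃ w, G.Adj v w ∧ w ≠ u ∧ φ w = c) :
    UniquePair G k φ u v := by
  intro ρ hρ hagree
  have hu : ρ u = φ u := by
    by_contra hne
    obtain ⟨w, huw, hwv, hw⟩ := hi (ρ u) (hρ.1 u) hne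
    have hwu : w ≠ u := fun h => G.loopless.irrefl u (h ▸ huw)
    have : ρ w = φ w := hagree w hwu hwv
    exact hρ.2 huw (this.trans hw).symm
  have hv : ρ v = φ v := by
    by_contra hne
    by_cases hvu : ρ v = φ u
    · exact hρ.2 hadj (hu.trans hvu.symm)
    · obtain ⟨w, hvw, hwu, hw⟩ := hii (ρ v) (hρ.1 v) hne hvu
      have hwv : w ≠ v := fun h => G.loopless.irrefl v (h ▸ hvw)
      have : ρ w = φ w := hagree w hwu hwv
      exact hρ.2 hvw (this.trans hw).symm
  funext w
  by_cases hwu : w = u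
  · subst hwu; exact hu
  by_cases hwv : w = v
  · subst hwv; exact hv
  exact hagree w hwu hwv

lemma sudokuNumber_le_of_uniquePair {φ : V → ℕ} (hφ : IsProperColouring G k φ)
    {u v : V} (huv : u ≠ v) (hup : UniquePair G k φ u v) :
    sudokuNumber G k ≤ Fintype.card V - 2 := by
  apply Nat.sInf_le
  refine ⟨fun w => if w = u ∨ w = v then none else some (φ w), ⟨⟨?_, ?_⟩, ?_⟩, ?_⟩
  · intro w c h
    dsimp only at h
    split_ifs at h
    exact (Option.some_injective _ h).symm ▸ hφ.1 w
  · intro a b hab c ha hb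
    dsimp only at ha hb
    split_ifs at ha hb
    rw [Option.some_inj] at ha hb
    exact hφ.2 hab (ha.trans hb.symm)
  · refine ⟨φ, ⟨hφ, ?_⟩, ?_⟩
    · intro w c h
      dsimp only at h
      split_ifs at h
      exact Option.some_injective _ h
    · rintro ρ ⟨hρ, hρext⟩
      apply hup ρ hρ
      intro w hwu hwv
      exact hρext w (φ w) (by dsimp only; rw [if_neg (by tauto)])
  · have hset : (Finset.univ.filter fun w =>
        ((if w = u ∨ w = v then (none : Option ℕ) else some (φ w)).isSome : Prop)) =
        Finset.univ \ {u, v} := by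
      ext w
      by_cases h : w = u ∨ w = v
      · simp only [Finset.mem_filter, Finset.mem_univ, true_and, if_pos h, Finset.mem_sdiff,
          Finset.mem_insert, Finset.mem_singleton, Option.isSome_none]
        constructor
        · intro hh; exact absurd hh (by simp)
        · intro hh; tauto
      · simp only [Finset.mem_filter, Finset.mem_univ, true_and, if_neg h, Finset.mem_sdiff,
          Finset.mem_insert, Finset.mem_singleton, Option.isSome_some]
        push_neg at h
        simp [h]
    rw [hset, Finset.card_sdiff_of_subset (Finset.subset_univ _), Finset.card_pair huv,
      Finset.card_univ]

lemma walk_exit {y z : V} (p : G.Walk z y) :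
    (z = y ∨ G.Adj y z) ∨
      ∃ x u, ¬(x = y ∨ G.Adj y x) ∧ G.Adj y u ∧ G.Adj u x := by
  induction p with
  | nil => exact Or.inl (Or.inl rfl)
  | @cons a b c h q ih =>
    rcases ih with hb | hex
    · rcases hb with rfl | hadj
      · exact Or.inl (Or.inr h.symm)
      · by_cases hz : a = c ∨ G.Adj c a
        · exact Or.inl hz
        · exact Or.inr ⟨a, b, hz, hadj, h.symm⟩
    · exact Or.inr hex

theorem exists_uniquePair (hχ : G.chromaticNumber = k) (hconn : G.Connected)
    {u₀ v₀ : V} (h₀ : u₀ ≠ v₀) (hna : ¬ G.Adj u₀ v₀) :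
    ∃ (φ : V → ℕ) (u v : V), IsProperColouring G k φ ∧ u ≠ v ∧ UniquePair G k φ u v := by
  by_contra hcon
  push_neg at hcon
  obtain ⟨φ₀, hφ₀⟩ := exists_proper hχ
  have hedge : ∃ a b, G.Adj a b := by
    obtain ⟨p⟩ := hconn.preconnected u₀ v₀
    cases p with
    | nil => exact absurd rfl h₀
    | cons h q => exact ⟨_, _, h⟩
  have hk2 : 2 ≤ k := by
    obtain ⟨a, b, hab⟩ := hedge
    have h1 := hφ₀.1 a; have h2 := hφ₀.1 b; have h3 := hφ₀.2 hab
    simp only [Finset.mem_Icc] at h1 h2; omega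
  have h1I : (1:ℕ) ∈ Finset.Icc 1 k := by simp only [Finset.mem_Icc]; omega
  -- a 1-minimal colouring
  set Sc : Set ℕ := {m | ∃ φ, IsProperColouring G k φ ∧
    (Finset.univ.filter fun w => φ w = 1).card = m} with hScdef
  have hScne : Sc.Nonempty := ⟨_, φ₀, hφ₀, rfl⟩
  obtain ⟨φ₁, hφ₁, hm1⟩ := Nat.sInf_mem hScne
  have hfull1 : ∀ x, φ₁ x = 1 → Full G k φ₁ x := by
    intro x hx
    by_contra hnf
    unfold Full at hnf; push_neg at hnf
    obtain ⟨e, heI, hene, hfree⟩ := hnf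
    have he1 : e ≠ 1 := by rw [hx] at hene; exact hene
    have hupd := proper_update hφ₁ heI hfree
    have hxmem : x ∈ Finset.univ.filter (fun w => φ₁ w = 1) := by
      simp only [Finset.mem_filter, Finset.mem_univ, true_and]; exact hx
    have hset : (Finset.univ.filter fun w => Function.update φ₁ x e w = 1)
        = (Finset.univ.filter fun w => φ₁ w = 1).erase x := by
      ext w
      simp only [Finset.mem_filter, Finset.mem_univ, true_and, Finset.mem_erase, ne_eq]
      by_cases hw : w = x
      · subst hw; rw [Function.update_self]; simp [he1]
      · rw [Function.update_of_ne hw]; simp [hw]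
    have hle : sInf Sc ≤ (Finset.univ.filter fun w => φ₁ w = 1).card - 1 := by
      apply Nat.sInf_le
      exact ⟨_, hupd, by rw [hset, Finset.card_erase_of_mem hxmem]⟩
    have hpos : 0 < (Finset.univ.filter fun w => φ₁ w = 1).card :=
      Finset.card_pos.mpr ⟨x, hxmem⟩
    omega
  have hm1pos : 1 ≤ sInf Sc := by
    obtain ⟨w, hw⟩ := uses_colour hχ hφ₁ h1I
    rw [← hm1]
    refine Finset.card_pos.mpr ⟨w, ?_⟩
    simp only [Finset.mem_filter, Finset.mem_univ, true_and]; exact hw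
  by_cases htwo : 2 ≤ sInf Sc
  · rw [← hm1] at htwo
    obtain ⟨a, ha, b, hb, hab⟩ := Finset.one_lt_card.mp
      (show 1 < (Finset.univ.filter fun w => φ₁ w = 1).card by omega)
    simp only [Finset.mem_filter, Finset.mem_univ, true_and] at ha hb
    have hnadj : ¬ G.Adj a b := fun h => hφ₁.2 h (ha.trans hb.symm)
    exact hcon φ₁ a b hφ₁ hab (config_NA hφ₁ hnadj (hfull1 a ha) (hfull1 b hb))
  · have hone : (Finset.univ.filter fun w => φ₁ w = 1).card = 1 := by omega
    obtain ⟨y, hy⟩ := Finset.card_eq_one.mp hone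
    have h1 : ∀ w, φ₁ w = 1 ↔ w = y := by
      intro w
      constructor
      · intro hw
        have hmem : w ∈ Finset.univ.filter (fun w => φ₁ w = 1) := by
          simp only [Finset.mem_filter, Finset.mem_univ, true_and]; exact hw
        rw [hy] at hmem; simpa using hmem
      · intro hw
        rw [hw]
        have : y ∈ Finset.univ.filter (fun w => φ₁ w = 1) := by
          rw [hy]; exact Finset.mem_singleton_self y
        simpa using this
    -- light neighbours of y are full, in any hub colouring
    have light_full : ∀ (φ : V → ℕ), IsProperColouring G k φ → (∀ w, φ w = 1 ↔ w = y) →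
        ∀ w, G.Adj y w → (∀ x, G.Adj y x → φ x = φ w → x = w) → Full G k φ w := by
      intro φ hφ hh1 w hyw hlight
      by_contra hnf
      unfold Full at hnf; push_neg at hnf
      obtain ⟨e, heI, hene, hfree⟩ := hnf
      have hwy : w ≠ y := fun h => G.loopless.irrefl y (h ▸ hyw)
      have he1 : e ≠ 1 := by
        intro h; subst h
        exact hfree y hyw.symm ((hh1 y).mpr rfl)
      have hφ' : IsProperColouring G k (Function.update φ w e) :=
        proper_update hφ heI hfree
      have hfree2 : ∀ x, G.Adj y x → Function.update φ w e x ≠ φ w := by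
        intro x hyx
        by_cases hxw : x = w
        · subst hxw; rw [Function.update_self]; exact hene
        · rw [Function.update_of_ne hxw]
          exact fun hcol => hxw (hlight x hyx hcol)
      have hφ'' : IsProperColouring G k
          (Function.update (Function.update φ w e) y (φ w)) :=
        proper_update hφ' (hφ.1 w) hfree2
      obtain ⟨z, hz⟩ := uses_colour hχ hφ'' h1I
      by_cases hzy : z = y
      · subst hzy; rw [Function.update_self] at hz
        exact hwy ((hh1 w).mp hz)
      · rw [Function.update_of_ne hzy] at hz
        by_cases hzw : z = w
        · subst hzw; rw [Function.update_self] at hz; exact he1 hz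
        · rw [Function.update_of_ne hzw] at hz
          exact hzy ((hh1 z).mp hz)
    -- hub-maximal colouring
    set Hub : (V → ℕ) → Prop := fun φ => IsProperColouring G k φ ∧
      (∀ w, φ w = 1 ↔ w = y) ∧ Full G k φ y with hHubdef
    have hHub₁ : Hub φ₁ := ⟨hφ₁, h1, hfull1 y ((h1 y).mpr rfl)⟩
    set Ssum : Set ℕ := {s | ∃ φ, Hub φ ∧ ∑ v, φ v = s} with hSsumdef
    have hSne : Ssum.Nonempty := ⟨_, φ₁, hHub₁, rfl⟩
    have hSbdd : BddAbove Ssum := by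
      refine ⟨Fintype.card V * k, ?_⟩
      rintro s ⟨φ, hφ, rfl⟩
      calc ∑ v, φ v ≤ ∑ _v : V, k :=
            Finset.sum_le_sum (fun v _ => (Finset.mem_Icc.mp (hφ.1.1 v)).2)
        _ = Fintype.card V * k := by
            rw [Finset.sum_const, smul_eq_mul, Finset.card_univ]
    obtain ⟨ρ, hρHub, hρsum⟩ := Nat.sSup_mem hSne hSbdd
    obtain ⟨hρ, hρ1, hρfull⟩ := hρHub
    have hρy : ρ y = 1 := (hρ1 y).mpr rfl
    have hmax : ∀ φ, Hub φ → ∑ v, φ v ≤ ∑ v, ρ v := by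
      intro φ hφ; rw [hρsum]; exact le_csSup hSbdd ⟨φ, hφ, rfl⟩
    set Heavy : ℕ → Prop := fun c =>
      ∃ a b, a ≠ b ∧ G.Adj y a ∧ G.Adj y b ∧ ρ a = c ∧ ρ b = c with hHeavydef
    have hnoheavy : ∀ c, ¬ Heavy c := by
      intro c₁ hc₁
      have hne : {c | Heavy c}.Nonempty := ⟨c₁, hc₁⟩
      obtain ⟨a, b, hab, hya, hyb, hra, hrb⟩ := Nat.sInf_mem hne
      set c0 := sInf {c | Heavy c} with hc0def
      have hay : a ≠ y := fun h => G.loopless.irrefl y (h ▸ hya)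
      have hc0I : c0 ∈ Finset.Icc 1 k := hra ▸ hρ.1 a
      have hnfa : ¬ Full G k ρ a := by
        intro hfa
        apply hcon ρ y a hρ (Ne.symm hay)
        apply config_AD hρ hya
        · intro col hcolI hcol1
          rw [hρy] at hcol1
          by_cases hcc : col = c0
          · exact ⟨b, hyb, Ne.symm hab, by rw [hrb, hcc]⟩
          · obtain ⟨w, hyw, hw⟩ := hρfull col hcolI (by rw [hρy]; exact hcol1)
            exact ⟨w, hyw, fun h => hcc (by rw [← hw, h, hra]), hw⟩
        · intro col hI hca hcy
          obtain ⟨w, haw, hw⟩ := hfa col hI hca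
          exact ⟨w, haw, fun h => hcy (by rw [← hw, h, hρy]), hw⟩
      unfold Full at hnfa; push_neg at hnfa
      obtain ⟨e, heI, hec, hfree⟩ := hnfa
      have hec0 : e ≠ c0 := by rw [hra] at hec; exact hec
      have he1 : e ≠ 1 := fun h => hfree y hya.symm (hρy.trans h.symm)
      by_cases hhe : Heavy e
      · -- heavy: recolour a upwards, contradict maximality
        have hce : c0 < e := lt_of_le_of_ne (Nat.sInf_le hhe) (Ne.symm hec0)
        have hρ' : IsProperColouring G k (Function.update ρ a e) :=
          proper_update hρ heI hfree
        have h1' : ∀ w, Function.update ρ a e w = 1 ↔ w = y := by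
          intro w
          by_cases hw : w = a
          · subst hw; rw [Function.update_self]
            constructor
            · intro h; exact absurd h he1
            · intro h; exact absurd h hay
          · rw [Function.update_of_ne hw]; exact hρ1 w
        have hfull' : Full G k (Function.update ρ a e) y := by
          intro col hI hcoly
          rw [Function.update_of_ne (Ne.symm hay), hρy] at hcoly
          by_cases hce' : col = e
          · exact ⟨a, hya, by rw [Function.update_self, hce']⟩
          · by_cases hcc : col = c0
            · exact ⟨b, hyb, by
                rw [Function.update_of_ne (Ne.symm hab), hrb, hcc]⟩
            · obtain ⟨w, hyw, hw⟩ := hρfull col hI (by rw [hρy]; exact hcoly)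
              have hwa : w ≠ a := fun h => hcc (by rw [← hw, h, hra])
              exact ⟨w, hyw, by rw [Function.update_of_ne hwa]; exact hw⟩
        have hub' : Hub (Function.update ρ a e) := ⟨hρ', h1', hfull'⟩
        have hsum1 : ∑ v, Function.update ρ a e v
            = e + ∑ v ∈ Finset.univ \ {a}, ρ v :=
          Finset.sum_update_of_mem (Finset.mem_univ a) ρ e
        have hsum2 : ∑ v, ρ v = ρ a + ∑ v ∈ Finset.univ \ {a}, ρ v := by
          rw [Finset.sdiff_singleton_eq_erase, Finset.add_sum_erase _ _ (Finset.mem_univ a)]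
        have hle := hmax _ hub'
        rw [hsum1] at hle
        rw [hra] at hsum2
        omega
      · -- light: recolour a to e, then (y, wₑ) is a good pair
        obtain ⟨we, hywe, hwe⟩ := hρfull e heI (by rw [hρy]; exact he1)
        have hlight : ∀ x, G.Adj y x → ρ x = e → x = we := by
          intro x hyx hx
          by_contra hxne
          exact hhe ⟨x, we, hxne, hyx, hywe, hx, hwe⟩
        have hwefull : Full G k ρ we :=
          light_full ρ hρ hρ1 we hywe
            (fun x hyx hx => hlight x hyx (hx.trans hwe))
        have hwea : ¬ G.Adj a we := fun h => hfree we h hwe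
        have hwene_a : we ≠ a := fun h => hec0 (by rw [← hwe, h, hra])
        have hρ' : IsProperColouring G k (Function.update ρ a e) :=
          proper_update hρ heI hfree
        have hρ'y : Function.update ρ a e y = 1 := by
          rw [Function.update_of_ne (Ne.symm hay)]; exact hρy
        have hρ'we : Function.update ρ a e we = e := by
          rw [Function.update_of_ne hwene_a]; exact hwe
        apply hcon _ y we hρ' (fun h => G.loopless.irrefl y (h ▸ hywe))
        apply config_AD hρ' hywe
        · intro col hI hcol
          rw [hρ'y] at hcol
          by_cases hce' : col = e
          · exact ⟨a, hya, Ne.symm hwene_a, by rw [Function.update_self, hce']⟩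
          · by_cases hcc : col = c0
            · refine ⟨b, hyb, ?_, by rw [Function.update_of_ne (Ne.symm hab), hrb, hcc]⟩
              intro h
              exact hec0 (by rw [← hwe, ← h, hrb])
            · obtain ⟨w, hyw, hw⟩ := hρfull col hI (by rw [hρy]; exact hcol)
              have hwa : w ≠ a := fun h => hcc (by rw [← hw, h, hra])
              have hwwe : w ≠ we := fun h => hce' (by rw [← hw, h, hwe])
              exact ⟨w, hyw, hwwe, by rw [Function.update_of_ne hwa]; exact hw⟩
        · intro col hI hcwe hcy
          rw [hρ'we] at hcwe
          rw [hρ'y] at hcy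
          obtain ⟨w, hwew, hw⟩ := hwefull col hI (by rw [hwe]; exact hcwe)
          have hwa : w ≠ a := fun h => hwea ((h ▸ hwew).symm)
          have hwy : w ≠ y := fun h => hcy (by rw [← hw, h, hρy])
          exact ⟨w, hwew, hwy, by rw [Function.update_of_ne hwa]; exact hw⟩
    -- no heavy colours: N(y) is a rainbow clique of full vertices
    have hallfull : ∀ w, G.Adj y w → Full G k ρ w := by
      intro w hyw
      apply light_full ρ hρ hρ1 w hyw
      intro x hyx hx
      by_contra hxne
      exact hnoheavy (ρ w) ⟨x, w, hxne, hyx, hyw, hx, rfl⟩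
    have hclique : ∀ a b, G.Adj y a → G.Adj y b → a ≠ b → G.Adj a b := by
      intro a b hya hyb hab
      by_contra hnadj
      exact hcon ρ a b hρ hab (config_NA hρ hnadj (hallfull a hya) (hallfull b hyb))
    have hz : ∃ z, ¬(z = y ∨ G.Adj y z) := by
      by_contra h; push_neg at h
      rcases h u₀ with rfl | hu
      · rcases h v₀ with rfl | hv
        · exact h₀ rfl
        · exact hna hv
      · rcases h v₀ with rfl | hv
        · exact hna hu.symm
        · exact hna (hclique u₀ v₀ hu hv h₀)
    obtain ⟨z, hzout⟩ := hz
    obtain ⟨p⟩ := hconn.preconnected z y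
    rcases walk_exit p with hin | ⟨x, u, hxout, hyu, hux⟩
    · exact hzout hin
    · have hxy : x ≠ y := fun h => hxout (Or.inl h)
      have hxnadj : ¬ G.Adj y x := fun h => hxout (Or.inr h)
      have hρx1 : ρ x ≠ 1 := fun h => hxy ((hρ1 x).mp h)
      obtain ⟨v, hyv, hv⟩ := hρfull (ρ x) (hρ.1 x) (by rw [hρy]; exact hρx1)
      have huv : u ≠ v := by
        intro h; subst h
        exact hρ.2 hux hv
      have hvy : v ≠ y := fun h => G.loopless.irrefl y (h ▸ hyv)
      have huy : u ≠ y := fun h => G.loopless.irrefl y (h ▸ hyu)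
      have hxv : x ≠ v := fun h => hxnadj (h ▸ hyv)
      have hadjuv : G.Adj u v := hclique u v hyu hyv huv
      apply hcon ρ u v hρ huv
      apply config_AD hρ hadjuv
      · intro col hI hcu
        by_cases hc1 : col = 1
        · exact ⟨y, hyu.symm, Ne.symm hvy, by rw [hρy, hc1]⟩
        · by_cases hcx : col = ρ x
          · exact ⟨x, hux, hxv, hcx.symm⟩
          · obtain ⟨w, hyw, hw⟩ := hρfull col hI (by rw [hρy]; exact hc1)
            have hwu : w ≠ u := fun h => hcu (by rw [← hw, h])
            have hwv : w ≠ v := fun h => hcx (by rw [← hw, h, hv])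
            exact ⟨w, hclique u w hyu hyw (Ne.symm hwu), hwv, hw⟩
      · intro col hI hcv hcu
        by_cases hc1 : col = 1
        · exact ⟨y, hyv.symm, Ne.symm huy, by rw [hρy, hc1]⟩
        · obtain ⟨w, hyw, hw⟩ := hρfull col hI (by rw [hρy]; exact hc1)
          have hwv : w ≠ v := fun h => hcv (by rw [← hw, h])
          have hwu : w ≠ u := fun h => hcu (by rw [← hw, h])
          exact ⟨w, hclique v w hyv hyw (Ne.symm hwv), hwu, hw⟩

theorem sudokuNumber_top (k : ℕ) (hχ : (⊤ : SimpleGraph V).chromaticNumber = k) :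
    sudokuNumber (⊤ : SimpleGraph V) k = Fintype.card V - 1 := by
  have hk : k = Fintype.card V := by
    have h := SimpleGraph.chromaticNumber_top (V := V)
    rw [hχ] at h
    exact_mod_cast h
  subst hk
  set n := Fintype.card V with hn
  clear_value n
  show sInf {m | ∃ ψ : V → Option ℕ, IsSudoku (⊤ : SimpleGraph V) n ψ ∧
    (Finset.univ.filter fun v => (ψ v).isSome).card = m} = n - 1
  have hinj : ∀ ρ : V → ℕ, IsProperColouring (⊤ : SimpleGraph V) n ρ →
      Function.Injective ρ := by
    intro ρ hρ a b hab
    by_contra hne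
    exact hρ.2 ((SimpleGraph.top_adj a b).mpr hne) hab
  by_cases hsmall : n ≤ 1
  · -- at most one vertex
    have h0 : (0:ℕ) ∈ {m | ∃ ψ : V → Option ℕ, IsSudoku (⊤ : SimpleGraph V) n ψ ∧
        (Finset.univ.filter fun v => (ψ v).isSome).card = m} := by
      refine ⟨fun _ => none, ⟨⟨fun v c h => by simp at h, fun u v h c hu => by simp at hu⟩,
        ?_⟩, by simp⟩
      refine ⟨fun _ => 1, ⟨⟨fun v => ?_, fun u v huv => ?_⟩, fun v c h => by simp at h⟩, ?_⟩
      · have hpos : 0 < n := by rw [hn]; exact Fintype.card_pos_iff.mpr ⟨v⟩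
        simp only [Finset.mem_Icc]
        omega
      · exact absurd (Fintype.card_le_one_iff.mp (by rw [← hn]; exact hsmall) u v) huv.ne
      · intro ρ hρ
        funext v
        have h1 := hρ.1.1 v
        have hpos : 0 < n := by rw [hn]; exact Fintype.card_pos_iff.mpr ⟨v⟩
        simp only [Finset.mem_Icc] at h1
        omega
    have hle := Nat.sInf_le h0
    rw [Nat.le_zero.mp hle]
    exact (Nat.sub_eq_zero_of_le hsmall).symm
  · push_neg at hsmall
    have hne : Nonempty V := Fintype.card_pos_iff.mp (by omega)
    set e := Fintype.equivFin V with he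
    set φK : V → ℕ := fun v => (e v : ℕ) + 1 with hφK
    have hφKp : IsProperColouring (⊤ : SimpleGraph V) n φK := by
      constructor
      · intro v
        simp only [Finset.mem_Icc, hφK]
        have := (e v).isLt
        omega
      · intro u v huv
        have hne' : u ≠ v := huv.ne
        simp only [hφK, ne_eq, Nat.add_right_cancel_iff]
        intro h
        exact hne' (e.injective (Fin.ext h))
    have himg : ∀ ρ : V → ℕ, IsProperColouring (⊤ : SimpleGraph V) n ρ →
        Finset.image ρ Finset.univ = Finset.Icc 1 n := by
      intro ρ hρ
      apply Finset.eq_of_subset_of_card_le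
      · intro c hc
        obtain ⟨v, _, rfl⟩ := Finset.mem_image.mp hc
        exact hρ.1 v
      · rw [Finset.card_image_of_injective _ (hinj ρ hρ), Finset.card_univ, Nat.card_Icc]
        omega
    have huniq1 : ∀ (ρ φ : V → ℕ) (v₀ : V), IsProperColouring (⊤ : SimpleGraph V) n ρ →
        IsProperColouring (⊤ : SimpleGraph V) n φ →
        (∀ w, w ≠ v₀ → ρ w = φ w) → ρ = φ := by
      intro ρ φ v₀ hρ hφ hagree
      funext w
      by_cases hw : w = v₀
      · subst hw
        have hmem : ρ w ∈ Finset.image φ Finset.univ := by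
          rw [himg φ hφ]; exact hρ.1 w
        obtain ⟨w', _, hw'⟩ := Finset.mem_image.mp hmem
        by_cases hww : w' = w
        · subst hww; exact hw'.symm
        · exfalso
          have hr : ρ w' = ρ w := (hagree w' hww).trans hw'
          exact hww (hinj ρ hρ hr)
      · exact hagree w hw
    have v₀ : V := Classical.arbitrary V
    have hupper : (n - 1) ∈ {m | ∃ ψ : V → Option ℕ, IsSudoku (⊤ : SimpleGraph V) n ψ ∧
        (Finset.univ.filter fun v => (ψ v).isSome).card = m} := by
      refine ⟨fun w => if w = v₀ then none else some (φK w), ⟨⟨?_, ?_⟩, φK, ⟨hφKp, ?_⟩, ?_⟩, ?_⟩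
      · intro w c h
        dsimp only at h
        split_ifs at h
        exact (Option.some_injective _ h).symm ▸ hφKp.1 w
      · intro a b hab c ha hb
        dsimp only at ha hb
        split_ifs at ha hb
        rw [Option.some_inj] at ha hb
        exact hφKp.2 hab (ha.trans hb.symm)
      · intro w c h
        dsimp only at h
        split_ifs at h
        exact Option.some_injective _ h
      · rintro ρ ⟨hρ, hρext⟩
        apply huniq1 ρ φK v₀ hρ hφKp
        intro w hw
        exact hρext w (φK w) (by dsimp only; rw [if_neg hw])
      · have hset : (Finset.univ.filter fun w =>
            ((if w = v₀ then (none : Option ℕ) else some (φK w)).isSome : Prop)) =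
            Finset.univ \ {v₀} := by
          ext w
          by_cases h : w = v₀
          · simp [h]
          · simp [h]
        rw [hset, Finset.card_sdiff_of_subset (Finset.subset_univ _), Finset.card_singleton,
          Finset.card_univ, ← hn]
    have hlower : ∀ m ∈ {m | ∃ ψ : V → Option ℕ, IsSudoku (⊤ : SimpleGraph V) n ψ ∧
        (Finset.univ.filter fun v => (ψ v).isSome).card = m}, n - 1 ≤ m := by
      rintro m ⟨ψ, ⟨hpp, hex⟩, hcard⟩
      by_contra hlt
      push_neg at hlt
      have hunc : (Finset.univ.filter fun v => ¬ ((ψ v).isSome : Prop)).card = n - m := by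
        rw [Finset.filter_not, Finset.card_sdiff_of_subset (Finset.filter_subset _ _),
          Finset.card_univ, hcard, ← hn]
      have h2 : 1 < (Finset.univ.filter fun v => ¬ ((ψ v).isSome : Prop)).card := by omega
      obtain ⟨a, ha, b, hb, hab⟩ := Finset.one_lt_card.mp h2
      simp only [Finset.mem_filter, Finset.mem_univ, true_and,
        Option.not_isSome_iff_eq_none] at ha hb
      obtain ⟨φ', ⟨hφ'p, hφ'e⟩, huni⟩ := hex
      have hφ''p : IsProperColouring (⊤ : SimpleGraph V) n (φ' ∘ (Equiv.swap a b)) := by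
        constructor
        · intro v; exact hφ'p.1 _
        · intro u v huv
          have hne' : u ≠ v := huv.ne
          have hsw : Equiv.swap a b u ≠ Equiv.swap a b v :=
            fun h => hne' ((Equiv.swap a b).injective h)
          exact fun h => hsw (hinj φ' hφ'p h)
      have hφ''e : ExtendsPartial (φ' ∘ (Equiv.swap a b)) ψ := by
        intro w c hw
        have hwa : w ≠ a := fun h => by rw [h, ha] at hw; cases hw
        have hwb : w ≠ b := fun h => by rw [h, hb] at hw; cases hw
        simp only [Function.comp_apply, Equiv.swap_apply_of_ne_of_ne hwa hwb]
        exact hφ'e w c hw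
      have heq := huni _ ⟨hφ''p, hφ''e⟩
      have heqa := congrFun heq a
      simp only [Function.comp_apply, Equiv.swap_apply_left] at heqa
      exact hab (hinj φ' hφ'p heqa).symm
    have hSne : {m | ∃ ψ : V → Option ℕ, IsSudoku (⊤ : SimpleGraph V) n ψ ∧
        (Finset.univ.filter fun v => (ψ v).isSome).card = m}.Nonempty := ⟨_, hupper⟩
    exact le_antisymm (Nat.sInf_le hupper) (hlower _ (Nat.sInf_mem hSne))

end SudokuAux

theorem stmt_10 {V : Type*} [Fintype V] [DecidableEq V]
    (G : SimpleGraph V) [DecidableRel G.Adj] (k : ℕ)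
    (hχ : G.chromaticNumber = k)
    (hconn : G.Connected) :
    sudokuNumber G k = Fintype.card V - 1 ↔ G = ⊤ := by
  constructor
  · intro hsn
    by_contra hne
    have hpair : ∃ u v : V, u ≠ v ∧ ¬ G.Adj u v := by
      by_contra h; push_neg at h
      apply hne
      ext u v
      simp only [SimpleGraph.top_adj]
      exact ⟨fun ha => ha.ne, fun hne' => h u v hne'⟩
    obtain ⟨u₀, v₀, h₀, hna⟩ := hpair
    obtain ⟨φ, u, v, hφ, huv, hup⟩ := SudokuAux.exists_uniquePair hχ hconn h₀ hna
    have hle := SudokuAux.sudokuNumber_le_of_uniquePair hφ huv hup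
    have hn2 : 1 < Fintype.card V := Fintype.one_lt_card_iff_nontrivial.mpr ⟨u₀, v₀, h₀⟩
    omega
  · intro h
    subst h
    exact SudokuAux.sudokuNumber_top k hχ
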